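/- The number of simple braids in SB_n equals F_{2n-1}, the (2n-1)-st Fibonacci number. -/

import Mathlib

/-- The braid relations on the free monoid over generators `x_0, …, x_{n-1}` (a braid group /
monoid on `n+1` strands has `n` generators): far-apart generators commute, and adjacent
generators satisfy `x_i x_{i+1} x_i = x_{i+1} x_i x_{i+1}`. -/
def braidRels (n : ℕ) : FreeMonoid (Fin n) → FreeMonoid (Fin n) → Prop := fun a b =>
  (∃ i j : Fin n, (i : ℕ) + 2 ≤ (j : ℕ) ∧
    a = FreeMonoid.of i * FreeMonoid.of j ∧ b = FreeMonoid.of j * FreeMonoid.of i) ∨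
  (∃ i j : Fin n, (j : ℕ) = (i : ℕ) + 1 ∧
    a = FreeMonoid.of i * FreeMonoid.of j * FreeMonoid.of i ∧
    b = FreeMonoid.of j * FreeMonoid.of i * FreeMonoid.of j)

/-- The positive braid monoid on `n` generators, as the quotient of the free monoid by the
congruence generated by the braid relations. -/
def BraidMonoid (n : ℕ) := (conGen (braidRels n)).Quotient

instance (n : ℕ) : Monoid (BraidMonoid n) := Con.monoid _

/-- The canonical projection from positive words to positive braids. -/
def brMk (n : ℕ) : FreeMonoid (Fin n) →* BraidMonoid n := Con.mk' _

/-- A positive braid is *simple* if it can be written as a positive word in which every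
generator occurs at most once. -/
def IsSimple {n : ℕ} (β : BraidMonoid n) : Prop :=
  ∃ w : List (Fin n), w.Nodup ∧ β = brMk n (FreeMonoid.ofList w)


namespace SimpleBraidAux

inductive H : Type
  | e | a | b | ab | ba | aba
  deriving DecidableEq

instance : Fintype H := ⟨{.e, .a, .b, .ab, .ba, .aba}, fun x => by cases x <;> simp⟩

def H.mul : H → H → H
  | .e, y => y
  | x, .e => x
  | .a, .a => .a
  | .a, .b => .ab
  | .a, .ab => .ab
  | .a, .ba => .aba
  | .a, .aba => .aba
  | .b, .a => .ba
  | .b, .b => .b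
  | .b, .ab => .aba
  | .b, .ba => .ba
  | .b, .aba => .aba
  | .ab, .a => .aba
  | .ab, .b => .ab
  | .ab, .ab => .aba
  | .ab, .ba => .aba
  | .ab, .aba => .aba
  | .ba, .a => .ba
  | .ba, .b => .aba
  | .ba, .ab => .aba
  | .ba, .ba => .aba
  | .ba, .aba => .aba
  | .aba, _ => .aba

instance : Monoid H where
  mul := H.mul
  one := H.e
  one_mul x := by cases x <;> rfl
  mul_one x := by cases x <;> rfl
  mul_assoc x y z := by
    show H.mul (H.mul x y) z = H.mul x (H.mul y z)
    revert x y z; decide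


/-- the decreasing run `[k, k-1, ..., j]`. -/
def runWord (j k : ℕ) : List ℕ := (List.range' j (k + 1 - j)).reverse

def wordOf : List (ℕ × ℕ) → List ℕ
  | [] => []
  | p :: L => runWord p.1 p.2 ++ wordOf L

lemma wordOf_append (A B : List (ℕ × ℕ)) : wordOf (A ++ B) = wordOf A ++ wordOf B := by
  induction A with
  | nil => rfl
  | cons p A ih => simp [wordOf, ih]

lemma mem_runWord {x j k : ℕ} : x ∈ runWord j k ↔ j ≤ x ∧ x ≤ k := by
  simp only [runWord, List.mem_reverse, List.mem_range'_1]
  omega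

lemma runWord_eq_cons {j k : ℕ} (h : j ≤ k) : runWord j k = k :: (List.range' j (k - j)).reverse := by
  unfold runWord
  have : k + 1 - j = (k - j) + 1 := by omega
  rw [this, List.range'_concat]
  simp
  omega

lemma runWord_concat {x j k : ℕ} (hj : x + 1 = j) (hk : j ≤ k) :
    runWord j k ++ [x] = runWord x k := by
  unfold runWord
  have h1 : k + 1 - x = (k + 1 - j) + 1 := by omega
  rw [h1, List.range'_succ]
  simp [hj]

lemma nodup_runWord (j k : ℕ) : (runWord j k).Nodup := by
  simp [runWord, List.nodup_range']

/-- membership predicate: `x` lies in one of the intervals of `L`. -/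
def inL (x : ℕ) (L : List (ℕ × ℕ)) : Prop := ∃ p ∈ L, p.1 ≤ x ∧ x ≤ p.2

/-- `i` and `i+1` lie in a common interval of `L`. -/
def Joined (i : ℕ) (L : List (ℕ × ℕ)) : Prop := ∃ p ∈ L, p.1 ≤ i ∧ i + 1 ≤ p.2

lemma mem_wordOf {x : ℕ} {L : List (ℕ × ℕ)} : x ∈ wordOf L ↔ inL x L := by
  induction L with
  | nil => simp [wordOf, inL]
  | cons p L ih => simp [wordOf, mem_runWord, inL, ih]

/-- canonical form data, without an upper bound. -/
def Canon0 (L : List (ℕ × ℕ)) : Prop :=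
  (∀ p ∈ L, p.1 ≤ p.2) ∧ L.Pairwise (fun p q => p.2 < q.1)

def Canon (m : ℕ) (L : List (ℕ × ℕ)) : Prop :=
  (∀ p ∈ L, p.1 ≤ p.2 ∧ p.2 < m) ∧ L.Pairwise (fun p q => p.2 < q.1)

lemma Canon.canon0 {m L} (h : Canon m L) : Canon0 L := ⟨fun p hp => (h.1 p hp).1, h.2⟩

lemma nodup_wordOf {L : List (ℕ × ℕ)} (h : Canon0 L) : (wordOf L).Nodup := by
  induction L with
  | nil => simp [wordOf]
  | cons p L ih =>
    obtain ⟨h1, h2⟩ := h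
    rw [List.pairwise_cons] at h2
    refine List.Nodup.append (nodup_runWord _ _) (ih ⟨fun q hq => h1 q (.tail _ hq), h2.2⟩) ?_
    intro x hx hx'
    rw [mem_runWord] at hx
    rw [mem_wordOf] at hx'
    obtain ⟨q, hq, hq1, hq2⟩ := hx'
    have := h2.1 q hq
    omega

end SimpleBraidAux

namespace SimpleBraidAux

def f (i x : ℕ) : H := if x = i then .a else if x = i + 1 then .b else .e

def phi (i : ℕ) (w : List ℕ) : H := (w.map (f i)).prod

lemma phi_append (i : ℕ) (u v : List ℕ) : phi i (u ++ v) = phi i u * phi i v := by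
  simp [phi]

lemma phi_runWord (i j k : ℕ) (h : j ≤ k) :
    phi i (runWord j k) =
      if j ≤ i ∧ i < k then .ba else if i = k then .a else if i + 1 = j then .b else .e := by
  induction k with
  | zero =>
    interval_cases j
    simp [runWord, phi, f]
    split_ifs <;> first | rfl | omega
  | succ k ih =>
    rcases Nat.lt_or_ge k j with hk | hk
    · -- j = k+1 : run is [k+1]
      have hj : j = k + 1 := by omega
      subst hj
      have : runWord (k+1) (k+1) = [k+1] := by
        simp [runWord]
      rw [this]
      simp only [phi, List.map_cons, List.map_nil, List.prod_cons, List.prod_nil, mul_one, f]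
      split_ifs <;> first | rfl | omega
    · -- run (j, k+1) = (k+1) :: run (j, k)
      have : runWord j (k+1) = (k+1) :: (List.range' j (k + 1 - j)).reverse := by
        simpa using runWord_eq_cons (le_trans hk (Nat.le_succ k))
      rw [this]
      show phi i ([k+1] ++ runWord j k) = _
      rw [phi_append, ih hk]
      have h1 : phi i [k+1] = f i (k+1) := by simp [phi]
      rw [h1]
      unfold f
      split_ifs <;> first | rfl | omega | (exfalso; omega)

lemma canon0_concat {L : List (ℕ × ℕ)} {j k : ℕ} (h : Canon0 (L ++ [(j, k)])) :
    Canon0 L ∧ j ≤ k ∧ ∀ p ∈ L, p.2 < j := by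
  obtain ⟨h1, h2⟩ := h
  rw [List.pairwise_append] at h2
  refine ⟨⟨fun p hp => h1 p (by simp [hp]), h2.1⟩, h1 (j, k) (by simp), ?_⟩
  intro p hp
  exact h2.2.2 p hp (j, k) (by simp)

lemma inL_concat {x j k : ℕ} {L : List (ℕ × ℕ)} :
    inL x (L ++ [(j, k)]) ↔ inL x L ∨ (j ≤ x ∧ x ≤ k) := by
  simp only [inL, List.mem_append, List.mem_singleton]
  constructor
  · rintro ⟨p, (hp | hp), h1, h2⟩
    · exact Or.inl ⟨p, hp, h1, h2⟩
    · subst hp; exact Or.inr ⟨h1, h2⟩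
  · rintro (⟨p, hp, h1, h2⟩ | ⟨h1, h2⟩)
    · exact ⟨p, Or.inl hp, h1, h2⟩
    · exact ⟨(j, k), Or.inr rfl, h1, h2⟩

lemma joined_concat {i j k : ℕ} {L : List (ℕ × ℕ)} :
    Joined i (L ++ [(j, k)]) ↔ Joined i L ∨ (j ≤ i ∧ i + 1 ≤ k) := by
  simp only [Joined, List.mem_append, List.mem_singleton]
  constructor
  · rintro ⟨p, (hp | hp), h1, h2⟩
    · exact Or.inl ⟨p, hp, h1, h2⟩
    · subst hp; exact Or.inr ⟨h1, h2⟩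
  · rintro (⟨p, hp, h1, h2⟩ | ⟨h1, h2⟩)
    · exact ⟨p, Or.inl hp, h1, h2⟩
    · exact ⟨(j, k), Or.inr rfl, h1, h2⟩

lemma inL_lt {x j : ℕ} {L : List (ℕ × ℕ)} (h : ∀ p ∈ L, p.2 < j) (hx : inL x L) : x < j := by
  obtain ⟨p, hp, h1, h2⟩ := hx
  have := h p hp
  omega

lemma joined_inL {i : ℕ} {L : List (ℕ × ℕ)} (h : Joined i L) : inL i L ∧ inL (i + 1) L := by
  obtain ⟨p, hp, h1, h2⟩ := h
  exact ⟨⟨p, hp, by omega⟩, ⟨p, hp, by omega⟩⟩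

open Classical in
/-- master formula for the invariant of a canonical word. -/
lemma phi_formula {L : List (ℕ × ℕ)} (h : Canon0 L) (i : ℕ) :
    phi i (wordOf L) =
      if Joined i L then .ba
      else if inL i L ∧ inL (i + 1) L then .ab
      else if inL i L then .a
      else if inL (i + 1) L then .b
      else .e := by
  induction L using List.reverseRecOn with
  | nil =>
    have e1 : ¬ Joined i ([] : List (ℕ × ℕ)) := by rintro ⟨p, hp, -⟩; simp at hp
    have e2 : ¬ inL i ([] : List (ℕ × ℕ)) := by rintro ⟨p, hp, -⟩; simp at hp
    have e3 : ¬ inL (i + 1) ([] : List (ℕ × ℕ)) := by rintro ⟨p, hp, -⟩; simp at hp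
    rw [if_neg e1, if_neg (fun hx => e2 hx.1), if_neg e2, if_neg e3]
    rfl
  | append_singleton L q ih =>
    obtain ⟨j, k⟩ := q
    obtain ⟨hc, hjk, hlt⟩ := canon0_concat h
    rw [wordOf_append, phi_append, ih hc]
    have hrun : wordOf [(j, k)] = runWord j k ++ wordOf [] := rfl
    have hrun2 : wordOf [(j, k)] = runWord j k := by rw [hrun]; simp [wordOf]
    rw [hrun2, phi_runWord i j k hjk]
    have hIi : inL i L → i < j := inL_lt hlt
    have hIi1 : inL (i + 1) L → i + 1 < j := inL_lt hlt
    have hJ : Joined i L → i + 1 < j := fun hj => hIi1 (joined_inL hj).2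
    rw [inL_concat, inL_concat, joined_concat]
    by_cases h1 : j ≤ i ∧ i < k
    · have e1 : ¬ Joined i L := fun hj => by have := hJ hj; omega
      have e2 : ¬ inL i L := fun hj => by have := hIi hj; omega
      have e3 : ¬ inL (i+1) L := fun hj => by have := hIi1 hj; omega
      rw [if_pos h1, if_neg e1, if_neg (fun hx => e2 hx.1), if_neg e2, if_neg e3,
        if_pos (Or.inr ⟨h1.1, by omega⟩ : Joined i L ∨ (j ≤ i ∧ i + 1 ≤ k))]
      rfl
    · by_cases h2 : i = k
      · have e1 : ¬ Joined i L := fun hj => by have := hJ hj; omega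
        have e2 : ¬ inL i L := fun hj => by have := hIi hj; omega
        have e3 : ¬ inL (i+1) L := fun hj => by have := hIi1 hj; omega
        rw [if_neg h1, if_pos h2, if_neg e1, if_neg (fun hx => e2 hx.1), if_neg e2, if_neg e3,
          if_neg (show ¬ (Joined i L ∨ (j ≤ i ∧ i + 1 ≤ k)) by
            rintro (hj | hj); exact e1 hj; omega),
          if_neg (show ¬ ((inL i L ∨ (j ≤ i ∧ i ≤ k)) ∧ (inL (i+1) L ∨ (j ≤ i + 1 ∧ i + 1 ≤ k))) by
            rintro ⟨-, (hj | hj)⟩; exact e3 hj; omega),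
          if_pos (Or.inr ⟨by omega, by omega⟩ : inL i L ∨ (j ≤ i ∧ i ≤ k))]
        rfl
      · by_cases h3 : i + 1 = j
        · have e1 : ¬ Joined i L := fun hj => by have := hJ hj; omega
          have e3 : ¬ inL (i+1) L := fun hj => by have := hIi1 hj; omega
          have e4 : ¬ (Joined i L ∨ (j ≤ i ∧ i + 1 ≤ k)) := by
            rintro (hj | hj); exact e1 hj; omega
          have e6 : inL (i+1) L ∨ (j ≤ i + 1 ∧ i + 1 ≤ k) := Or.inr ⟨by omega, by omega⟩
          rw [if_neg h1, if_neg h2, if_pos h3, if_neg e1, if_neg (fun hx => e3 hx.2),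
            if_neg e3, if_neg e4]
          by_cases e2 : inL i L
          · rw [if_pos e2, if_pos (⟨Or.inl e2, e6⟩ :
              (inL i L ∨ (j ≤ i ∧ i ≤ k)) ∧ (inL (i+1) L ∨ (j ≤ i + 1 ∧ i + 1 ≤ k)))]
            rfl
          · rw [if_neg e2,
              if_neg (show ¬ ((inL i L ∨ (j ≤ i ∧ i ≤ k)) ∧ (inL (i+1) L ∨ (j ≤ i + 1 ∧ i + 1 ≤ k))) by
                rintro ⟨(hj | hj), -⟩; exact e2 hj; omega),
              if_neg (show ¬ (inL i L ∨ (j ≤ i ∧ i ≤ k)) by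
                rintro (hj | hj); exact e2 hj; omega),
              if_pos e6]
            rfl
        · have hcase : i + 1 < j ∨ k < i := by omega
          rw [if_neg h1, if_neg h2, if_neg h3]
          rcases hcase with hcs | hcs
          · have e4 : (Joined i L ∨ (j ≤ i ∧ i + 1 ≤ k)) ↔ Joined i L := by
              constructor
              · rintro (hj | hj); exact hj; omega
              · exact Or.inl
            have e5 : (inL i L ∨ (j ≤ i ∧ i ≤ k)) ↔ inL i L := by
              constructor
              · rintro (hj | hj); exact hj; omega
              · exact Or.inl
            have e6 : (inL (i+1) L ∨ (j ≤ i + 1 ∧ i + 1 ≤ k)) ↔ inL (i+1) L := by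
              constructor
              · rintro (hj | hj); exact hj; omega
              · exact Or.inl
            simp only [e4, e5, e6]
            by_cases c1 : Joined i L
            · rw [if_pos c1]; rfl
            · rw [if_neg c1]
              by_cases c2 : inL i L ∧ inL (i+1) L
              · rw [if_pos c2]; rfl
              · rw [if_neg c2]
                by_cases c3 : inL i L
                · rw [if_pos c3]; rfl
                · rw [if_neg c3]
                  by_cases c4 : inL (i+1) L
                  · rw [if_pos c4]; rfl
                  · rw [if_neg c4]; rfl
          · have e1 : ¬ Joined i L := fun hj => by have := hIi (joined_inL hj).1; omega
            have e2 : ¬ inL i L := fun hj => by have := hIi hj; omega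
            have e3 : ¬ inL (i+1) L := fun hj => by have := hIi1 hj; omega
            rw [if_neg e1, if_neg (fun hx => e2 hx.1), if_neg e2, if_neg e3,
              if_neg (show ¬ (Joined i L ∨ (j ≤ i ∧ i + 1 ≤ k)) by
                rintro (hj | hj); exact e1 hj; omega),
              if_neg (show ¬ ((inL i L ∨ (j ≤ i ∧ i ≤ k)) ∧ (inL (i+1) L ∨ (j ≤ i + 1 ∧ i + 1 ≤ k))) by
                rintro ⟨(hj | hj), -⟩; exact e2 hj; omega),
              if_neg (show ¬ (inL i L ∨ (j ≤ i ∧ i ≤ k)) by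
                rintro (hj | hj); exact e2 hj; omega),
              if_neg (show ¬ (inL (i+1) L ∨ (j ≤ i + 1 ∧ i + 1 ≤ k)) by
                rintro (hj | hj); exact e3 hj; omega)]
            rfl

lemma inL_le {x j k : ℕ} {L : List (ℕ × ℕ)} (h : Canon0 (L ++ [(j, k)]))
    (hx : inL x (L ++ [(j, k)])) : x ≤ k := by
  obtain ⟨-, hjk, hlt⟩ := canon0_concat h
  rw [inL_concat] at hx
  rcases hx with hx | hx
  · have := inL_lt hlt hx; omega
  · omega

lemma eq_nil_of_not_inL {L : List (ℕ × ℕ)} (h : Canon0 L) (h2 : ∀ i, ¬ inL i L) : L = [] := by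
  rcases List.eq_nil_or_concat L with rfl | ⟨M, ⟨j, k⟩, rfl⟩
  · rfl
  · exfalso
    simp only [List.concat_eq_append] at *
    refine h2 k ?_
    rw [inL_concat]
    exact Or.inr ⟨(canon0_concat h).2.1, le_refl _⟩

lemma canon_ext_aux (n : ℕ) : ∀ L L' : List (ℕ × ℕ), L.length ≤ n → Canon0 L → Canon0 L' →
    (∀ i, inL i L ↔ inL i L') → (∀ i, Joined i L ↔ Joined i L') → L = L' := by
  induction n with
  | zero =>
    intro L L' hn hL hL' hI hJ
    have hL0 : L = [] := by
      cases L
      · rfl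
      · simp at hn
    subst hL0
    refine (eq_nil_of_not_inL hL' ?_).symm
    intro i hi
    rw [← hI] at hi
    obtain ⟨p, hp, -⟩ := hi
    simp at hp
  | succ n ihn =>
  intro L L' hn hL hL' hI hJ
  rcases List.eq_nil_or_concat L with rfl | ⟨M, ⟨j, k⟩, rfl⟩
  · refine (eq_nil_of_not_inL hL' ?_).symm
    intro i hi
    rw [← hI] at hi
    obtain ⟨p, hp, -⟩ := hi
    simp at hp
  · simp only [List.concat_eq_append] at *
    rcases List.eq_nil_or_concat L' with rfl | ⟨M', ⟨j', k'⟩, rfl⟩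
    · exfalso
      have : inL k (M ++ [(j, k)]) := by
        rw [inL_concat]
        exact Or.inr ⟨(canon0_concat hL).2.1, le_refl _⟩
      rw [hI] at this
      obtain ⟨p, hp, -⟩ := this
      simp at hp
    · simp only [List.concat_eq_append] at *
      obtain ⟨hM, hjk, hlt⟩ := canon0_concat hL
      obtain ⟨hM', hjk', hlt'⟩ := canon0_concat hL'
      -- k = k'
      have hkk' : k = k' := by
        have h1 : inL k (M ++ [(j, k)]) := by
          rw [inL_concat]; exact Or.inr ⟨hjk, le_refl _⟩
        have h2 : inL k' (M' ++ [(j', k')]) := by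
          rw [inL_concat]; exact Or.inr ⟨hjk', le_refl _⟩
        have := inL_le hL' ((hI k).1 h1)
        have := inL_le hL ((hI k').2 h2)
        omega
      subst hkk'
      -- j = j'
      have key : ∀ (A : List (ℕ × ℕ)) a b, Canon0 (A ++ [(a, k)]) → a ≤ b → b ≤ k →
          Joined (b - 1) (A ++ [(a, k)]) ∨ a = b := by
        intro A a b hA hab hbk
        rcases Nat.eq_or_lt_of_le hab with rfl | hlt2
        · exact Or.inr rfl
        · left
          rw [joined_concat]
          exact Or.inr ⟨by omega, by omega⟩
      have hnj : ∀ (A : List (ℕ × ℕ)) a, Canon0 (A ++ [(a, k)]) → a ≤ k →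
          ¬ Joined (a - 1) (A ++ [(a, k)]) ∨ a = 0 := by
        intro A a hA hak
        rcases Nat.eq_zero_or_pos a with rfl | hpos
        · exact Or.inr rfl
        · left
          obtain ⟨-, -, hlt3⟩ := canon0_concat hA
          rw [joined_concat]
          rintro (⟨p, hp, h1, h2⟩ | ⟨h1, h2⟩)
          · have := hlt3 p hp; omega
          · omega
      have hjj' : j = j' := by
        by_contra hne
        rcases Nat.lt_or_ge j j' with hlt2 | hlt2
        · -- j < j' ≤ k : Joined (j'-1) L but not L'
          have h1 : Joined (j' - 1) (M ++ [(j, k)]) := by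
            rw [joined_concat]; exact Or.inr ⟨by omega, by omega⟩
          rcases hnj M' j' hL' hjk' with h2 | h2
          · exact h2 ((hJ _).1 h1)
          · omega
        · have hlt2' : j' < j := by omega
          have h1 : Joined (j - 1) (M' ++ [(j', k)]) := by
            rw [joined_concat]; exact Or.inr ⟨by omega, by omega⟩
          rcases hnj M j hL hjk with h2 | h2
          · exact h2 ((hJ _).2 h1)
          · omega
      subst hjj'
      -- strip last run
      have hIM : ∀ i, inL i M ↔ inL i M' := by
        intro i
        have e1 : inL i M ↔ (inL i (M ++ [(j, k)]) ∧ i < j) := by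
          constructor
          · intro hx; exact ⟨by rw [inL_concat]; exact Or.inl hx, inL_lt hlt hx⟩
          · rintro ⟨hx, hij⟩
            rw [inL_concat] at hx
            rcases hx with hx | hx
            · exact hx
            · omega
        have e2 : inL i M' ↔ (inL i (M' ++ [(j, k)]) ∧ i < j) := by
          constructor
          · intro hx; exact ⟨by rw [inL_concat]; exact Or.inl hx, inL_lt hlt' hx⟩
          · rintro ⟨hx, hij⟩
            rw [inL_concat] at hx
            rcases hx with hx | hx
            · exact hx
            · omega
        rw [e1, e2, hI]
      have hJM : ∀ i, Joined i M ↔ Joined i M' := by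
        intro i
        have e1 : Joined i M ↔ (Joined i (M ++ [(j, k)]) ∧ i + 1 < j) := by
          constructor
          · intro hx
            exact ⟨by rw [joined_concat]; exact Or.inl hx, inL_lt hlt (joined_inL hx).2⟩
          · rintro ⟨hx, hij⟩
            rw [joined_concat] at hx
            rcases hx with hx | hx
            · exact hx
            · omega
        have e2 : Joined i M' ↔ (Joined i (M' ++ [(j, k)]) ∧ i + 1 < j) := by
          constructor
          · intro hx
            exact ⟨by rw [joined_concat]; exact Or.inl hx, inL_lt hlt' (joined_inL hx).2⟩
          · rintro ⟨hx, hij⟩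
            rw [joined_concat] at hx
            rcases hx with hx | hx
            · exact hx
            · omega
        rw [e1, e2, hJ]
      have : M = M' := by
        refine ihn M M' ?_ hM hM' hIM hJM
        simp at hn ⊢
        omega
      rw [this]

lemma joined_iff_phi {L : List (ℕ × ℕ)} (h : Canon0 L) (i : ℕ) :
    Joined i L ↔ phi i (wordOf L) = .ba := by
  rw [phi_formula h i]
  classical
  by_cases c1 : Joined i L
  · simp [c1]
  · rw [if_neg c1]
    simp only [c1, false_iff]
    by_cases c2 : inL i L ∧ inL (i+1) L
    · rw [if_pos c2]; exact fun hc => by cases hc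
    · rw [if_neg c2]
      by_cases c3 : inL i L
      · rw [if_pos c3]; exact fun hc => by cases hc
      · rw [if_neg c3]
        by_cases c4 : inL (i+1) L
        · rw [if_pos c4]; exact fun hc => by cases hc
        · rw [if_neg c4]; exact fun hc => by cases hc

lemma inL_iff_phi {L : List (ℕ × ℕ)} (h : Canon0 L) (i : ℕ) :
    inL i L ↔ (phi i (wordOf L) = .ba ∨ phi i (wordOf L) = .ab ∨ phi i (wordOf L) = .a) := by
  rw [phi_formula h i]
  classical
  by_cases c1 : Joined i L
  · rw [if_pos c1]
    constructor
    · intro _; exact Or.inl rfl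
    · intro _; exact (joined_inL c1).1
  · rw [if_neg c1]
    by_cases c2 : inL i L ∧ inL (i+1) L
    · rw [if_pos c2]
      simp [c2.1]
    · rw [if_neg c2]
      by_cases c3 : inL i L
      · rw [if_pos c3]
        simp [c3]
      · rw [if_neg c3]
        simp only [c3, false_iff]
        by_cases c4 : inL (i+1) L
        · rw [if_pos c4]
          rintro (hc | hc | hc) <;> cases hc
        · rw [if_neg c4]
          rintro (hc | hc | hc) <;> cases hc

/-- two canonical forms with identical `phi`-invariants agree. -/
lemma canon_ext {L L' : List (ℕ × ℕ)} (hL : Canon0 L) (hL' : Canon0 L')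
    (hphi : ∀ i, phi i (wordOf L) = phi i (wordOf L')) : L = L' := by
  refine canon_ext_aux L.length L L' le_rfl hL hL' ?_ ?_
  · intro i
    rw [inL_iff_phi hL i, inL_iff_phi hL' i, hphi i]
  · intro i
    rw [joined_iff_phi hL i, joined_iff_phi hL' i, hphi i]

/-! ### Connecting to the braid monoid -/

variable {m : ℕ}

/-- embed a natural number word into `Fin m` (values `< m` are preserved). -/
def emb (m : ℕ) (hm : 0 < m) (x : ℕ) : Fin m := ⟨x % m, Nat.mod_lt _ hm⟩

lemma emb_val {x : ℕ} (hm : 0 < m) (hx : x < m) : ((emb m hm x) : ℕ) = x := Nat.mod_eq_of_lt hx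

/-- the braid monoid element represented by a natural-number word. -/
def bm (m : ℕ) (hm : 0 < m) (w : List ℕ) : BraidMonoid m :=
  brMk m (FreeMonoid.ofList (w.map (emb m hm)))

lemma bm_append (hm : 0 < m) (u v : List ℕ) : bm m hm (u ++ v) = bm m hm u * bm m hm v := by
  unfold bm
  rw [List.map_append]
  rw [show FreeMonoid.ofList (u.map (emb m hm) ++ v.map (emb m hm)) =
    FreeMonoid.ofList (u.map (emb m hm)) * FreeMonoid.ofList (v.map (emb m hm)) from rfl]
  exact map_mul _ _ _

/-- far-apart commutation in the braid monoid. -/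
lemma bm_swap (hm : 0 < m) {x y : ℕ} (hx : x < m) (hy : y < m) (hxy : x + 2 ≤ y) :
    bm m hm [x, y] = bm m hm [y, x] := by
  refine ((conGen (braidRels m)).eq).mpr ?_
  refine ConGen.Rel.of _ _ ?_
  left
  refine ⟨emb m hm x, emb m hm y, ?_, rfl, rfl⟩
  rw [emb_val hm hx, emb_val hm hy]
  exact hxy

/-- a small letter commutes past a word of large letters. -/
lemma bm_commute (hm : 0 < m) {x : ℕ} (hx : x < m) :
    ∀ u : List ℕ, (∀ y ∈ u, y < m ∧ x + 2 ≤ y) →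
    bm m hm (u ++ [x]) = bm m hm (x :: u) := by
  intro u
  induction u with
  | nil => intro _; rfl
  | cons y u ih =>
    intro hu
    have hy := hu y (by simp)
    have h1 : bm m hm (y :: (u ++ [x])) = bm m hm [y] * bm m hm (u ++ [x]) :=
      bm_append hm [y] (u ++ [x])
    rw [List.cons_append, h1, ih (fun z hz => hu z (by simp [hz]))]
    have h2 : bm m hm (x :: u) = bm m hm [x] * bm m hm u := bm_append hm [x] u
    have h3 : bm m hm (y :: x :: u) = bm m hm [y, x] * bm m hm u := bm_append hm [y, x] u
    have h4 : bm m hm (x :: y :: u) = bm m hm [x, y] * bm m hm u := bm_append hm [x, y] u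
    rw [h2, ← mul_assoc, ← bm_append hm [y] [x], show ([y] ++ [x] : List ℕ) = [y, x] from rfl,
      ← h3, show (x :: y :: u : List ℕ) = [x, y] ++ u from rfl, bm_append hm [x, y] u,
      bm_swap hm hx hy.1 hy.2, h3]

/-- the `H`-valued invariant, as a monoid hom on positive words over `Fin m`. -/
def phiHom (m i : ℕ) : FreeMonoid (Fin m) →* H :=
  FreeMonoid.lift (fun t => f i (t : ℕ))

lemma phiHom_braidRels (i : ℕ) : ∀ u v, braidRels m u v → phiHom m i u = phiHom m i v := by
  rintro u v (⟨p, q, hpq, rfl, rfl⟩ | ⟨p, q, hpq, rfl, rfl⟩)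
  · simp only [phiHom, map_mul, FreeMonoid.lift_eval_of]
    show H.mul (f i p) (f i q) = H.mul (f i q) (f i p)
    unfold f
    split_ifs <;> first | rfl | omega
  · simp only [phiHom, map_mul, FreeMonoid.lift_eval_of]
    show H.mul (H.mul (f i p) (f i q)) (f i p) = H.mul (H.mul (f i q) (f i p)) (f i q)
    unfold f
    split_ifs <;> first | rfl | omega

lemma phiHom_eq_of_brMk_eq {i : ℕ} {u v : FreeMonoid (Fin m)} (h : brMk m u = brMk m v) :
    phiHom m i u = phiHom m i v := by
  have hle : conGen (braidRels m) ≤ Con.ker (phiHom m i) :=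
    Con.conGen_le.mpr (fun x y hxy => (Con.ker_rel _).mpr (phiHom_braidRels i x y hxy))
  have hc : (conGen (braidRels m)) u v := ((conGen (braidRels m)).eq).mp h
  exact (Con.ker_rel _).mp (hle hc)

lemma phiHom_bm (hm : 0 < m) (i : ℕ) (w : List ℕ) (hw : ∀ x ∈ w, x < m) :
    phiHom m i (FreeMonoid.ofList (w.map (emb m hm))) = phi i w := by
  induction w with
  | nil => rfl
  | cons x w ih =>
    have h1 : FreeMonoid.ofList ((x :: w).map (emb m hm)) =
        FreeMonoid.of (emb m hm x) * FreeMonoid.ofList (w.map (emb m hm)) := rfl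
    rw [h1, map_mul, ih (fun z hz => hw z (by simp [hz]))]
    have h2 : phiHom m i (FreeMonoid.of (emb m hm x)) = f i x := by
      simp only [phiHom, FreeMonoid.lift_eval_of]
      rw [emb_val hm (hw x (by simp))]
    rw [h2]
    rfl

/-! ### The insertion algorithm producing canonical forms -/

/-- reversed canonical data (most recent run first). -/
def RC (m : ℕ) (R : List (ℕ × ℕ)) : Prop :=
  (∀ p ∈ R, p.1 ≤ p.2 ∧ p.2 < m) ∧ R.Pairwise (fun p q => q.2 < p.1)

lemma RC_iff_canon {R : List (ℕ × ℕ)} : RC m R ↔ Canon m R.reverse := by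
  unfold RC Canon
  rw [List.pairwise_reverse]
  simp

def ins (x : ℕ) : List (ℕ × ℕ) → List (ℕ × ℕ)
  | [] => [(x, x)]
  | (j, k) :: R =>
    if k < x then (x, x) :: (j, k) :: R
    else if x + 1 = j then (x, k) :: R
    else (j, k) :: ins x R

lemma ins_spec (hm : 0 < m) {x : ℕ} (hx : x < m) :
    ∀ R : List (ℕ × ℕ), RC m R → ¬ inL x R →
      RC m (ins x R) ∧ (∀ y, inL y (ins x R) ↔ (y = x ∨ inL y R)) ∧
      bm m hm (wordOf R.reverse ++ [x]) = bm m hm (wordOf (ins x R).reverse) := by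
  intro R
  induction R with
  | nil =>
    intro _ _
    refine ⟨⟨by simp [ins]; omega, by simp [ins]⟩, ?_, ?_⟩
    · intro y
      constructor
      · rintro ⟨p, hp, h1, h2⟩
        simp [ins] at hp
        subst hp
        left; omega
      · intro hy
        rcases hy with heq | ⟨p, hp, -⟩
        · exact ⟨(x, x), by simp [ins], by omega, by omega⟩
        · simp at hp
    · show bm m hm (wordOf ([] : List (ℕ × ℕ)) ++ [x]) = bm m hm (wordOf (ins x []).reverse)
      have h1 : x + 1 - x = 1 := by omega
      have e : wordOf (ins x []).reverse = [x] := by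
        show wordOf [(x, x)].reverse = [x]
        simp [wordOf, runWord, h1]
      rw [e]
      rfl
  | cons p R ih =>
    obtain ⟨j, k⟩ := p
    intro hRC hnx
    have hjk : j ≤ k := (hRC.1 (j, k) (by simp)).1
    have hkm : k < m := (hRC.1 (j, k) (by simp)).2
    have hRCR : RC m R := ⟨fun q hq => hRC.1 q (by simp [hq]), (List.pairwise_cons.mp hRC.2).2⟩
    have htail : ∀ q ∈ R, q.2 < j := (List.pairwise_cons.mp hRC.2).1
    have hnxh : ¬ (j ≤ x ∧ x ≤ k) := fun hc => hnx ⟨(j, k), by simp, hc.1, hc.2⟩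
    have hnxR : ¬ inL x R := fun hin => by
      obtain ⟨q, hq, h1, h2⟩ := hin
      exact hnx ⟨q, by simp [hq], h1, h2⟩
    by_cases hc1 : k < x
    · rw [show ins x ((j, k) :: R) = (x, x) :: (j, k) :: R from by rw [ins]; rw [if_pos hc1]]
      refine ⟨⟨?_, ?_⟩, ?_, ?_⟩
      · intro q hq
        rcases List.mem_cons.mp hq with rfl | hq
        · exact ⟨le_refl _, hx⟩
        · exact hRC.1 q hq
      · rw [List.pairwise_cons]
        refine ⟨?_, hRC.2⟩
        intro q hq
        rcases List.mem_cons.mp hq with rfl | hq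
        · simp; omega
        · have := htail q hq; simp; omega
      · intro y
        constructor
        · rintro ⟨q, hq, h1, h2⟩
          rcases List.mem_cons.mp hq with rfl | hq
          · left; simp at h1 h2; omega
          · right; exact ⟨q, hq, h1, h2⟩
        · intro hy
          rcases hy with heq | ⟨q, hq, h1, h2⟩
          · exact ⟨(x, x), by simp, by omega, by omega⟩
          · exact ⟨q, by simp [hq], h1, h2⟩
      · have h1 : x + 1 - x = 1 := by omega
        have e1 : wordOf ((x, x) :: ((j, k) :: R)).reverse
            = wordOf (((j, k) :: R)).reverse ++ [x] := by
          rw [List.reverse_cons, wordOf_append]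
          simp [wordOf, runWord, h1]
        rw [e1]
    · by_cases hc2 : x + 1 = j
      · rw [show ins x ((j, k) :: R) = (x, k) :: R from by rw [ins]; rw [if_neg hc1, if_pos hc2]]
        have hxk : x ≤ k := by omega
        refine ⟨⟨?_, ?_⟩, ?_, ?_⟩
        · intro q hq
          rcases List.mem_cons.mp hq with rfl | hq
          · exact ⟨hxk, hkm⟩
          · exact hRCR.1 q hq
        · rw [List.pairwise_cons]
          refine ⟨?_, (List.pairwise_cons.mp hRC.2).2⟩
          intro q hq
          have h1 := htail q hq
          have h2 : q.2 ≠ x := by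
            intro heq
            have hq12 := (hRCR.1 q hq).1
            exact hnxR ⟨q, hq, by omega, by omega⟩
          show q.2 < x
          omega
        · intro y
          constructor
          · rintro ⟨q, hq, h1, h2⟩
            rcases List.mem_cons.mp hq with rfl | hq
            · simp at h1 h2
              rcases Nat.eq_or_lt_of_le h1 with heq | h1'
              · left; omega
              · right; exact ⟨(j, k), by simp, by omega, by simpa using h2⟩
            · right; exact ⟨q, by simp [hq], h1, h2⟩
          · intro hy
            rcases hy with heq | ⟨q, hq, h1, h2⟩
            · exact ⟨(x, k), by simp, by omega, by simp; omega⟩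
            · rcases List.mem_cons.mp hq with rfl | hq
              · simp at h1 h2
                exact ⟨(x, k), by simp, by omega, by simp; omega⟩
              · exact ⟨q, by simp [hq], h1, h2⟩
        · rw [List.reverse_cons, List.reverse_cons, wordOf_append, wordOf_append]
          have e1 : wordOf [(j, k)] ++ [x] = wordOf [(x, k)] := by
            simp only [wordOf, List.append_nil]
            exact runWord_concat hc2 hjk
          rw [List.append_assoc, e1]
      · rw [show ins x ((j, k) :: R) = (j, k) :: ins x R from by
          rw [ins]; rw [if_neg hc1, if_neg hc2]]
        have hxj : x + 1 < j := by omega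
        obtain ⟨ihRC, ihin, ihbm⟩ := ih hRCR hnxR
        refine ⟨⟨?_, ?_⟩, ?_, ?_⟩
        · intro q hq
          rcases List.mem_cons.mp hq with rfl | hq
          · exact ⟨hjk, hkm⟩
          · exact ihRC.1 q hq
        · rw [List.pairwise_cons]
          refine ⟨?_, ihRC.2⟩
          intro q hq
          have hq2 : inL q.2 (ins x R) := ⟨q, hq, (ihRC.1 q hq).1, le_refl _⟩
          rw [ihin] at hq2
          rcases hq2 with heq | ⟨r, hr, h1, h2⟩
          · simp; omega
          · have := htail r hr; simp; omega
        · intro y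
          constructor
          · rintro ⟨q, hq, h1, h2⟩
            rcases List.mem_cons.mp hq with rfl | hq
            · right; exact ⟨(j, k), by simp, h1, h2⟩
            · have hy : inL y (ins x R) := ⟨q, hq, h1, h2⟩
              rw [ihin] at hy
              rcases hy with heq | ⟨r, hr, h3, h4⟩
              · left; exact heq
              · right; exact ⟨r, by simp [hr], h3, h4⟩
          · intro hy
            rcases hy with heq | ⟨q, hq, h1, h2⟩
            · obtain ⟨q, hq, h1, h2⟩ := (ihin y).mpr (Or.inl heq)
              exact ⟨q, by simp [hq], h1, h2⟩
            · rcases List.mem_cons.mp hq with rfl | hq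
              · exact ⟨(j, k), by simp, h1, h2⟩
              · obtain ⟨r, hr, h3, h4⟩ := (ihin y).mpr (Or.inr ⟨q, hq, h1, h2⟩)
                exact ⟨r, by simp [hr], h3, h4⟩
        · have e1 : ((j, k) :: R).reverse = R.reverse ++ [(j, k)] := by simp
          have e2 : ((j, k) :: ins x R).reverse = (ins x R).reverse ++ [(j, k)] := by simp
          rw [e1, e2, wordOf_append, wordOf_append, List.append_assoc]
          rw [show bm m hm (wordOf R.reverse ++ (wordOf [(j, k)] ++ [x]))
              = bm m hm (wordOf R.reverse) * bm m hm (wordOf [(j, k)] ++ [x]) from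
            bm_append hm _ _]
          rw [show bm m hm (wordOf (ins x R).reverse ++ wordOf [(j, k)])
              = bm m hm (wordOf (ins x R).reverse) * bm m hm (wordOf [(j, k)]) from
            bm_append hm _ _]
          have hrun : ∀ y ∈ wordOf [(j, k)], y < m ∧ x + 2 ≤ y := by
            intro y hy
            simp only [wordOf, List.append_nil] at hy
            rw [mem_runWord] at hy
            constructor <;> omega
          rw [bm_commute hm hx _ hrun,
            show (x :: wordOf [(j, k)]) = [x] ++ wordOf [(j, k)] from rfl,
            bm_append hm, ← mul_assoc, ← bm_append hm, ihbm]

lemma fold_spec (hm : 0 < m) :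
    ∀ (w : List ℕ) (R : List (ℕ × ℕ)), RC m R → w.Nodup → (∀ x ∈ w, x < m) →
      (∀ x ∈ w, ¬ inL x R) →
      RC m (w.foldl (fun S y => ins y S) R) ∧
      bm m hm (wordOf R.reverse ++ w) =
        bm m hm (wordOf (w.foldl (fun S y => ins y S) R).reverse) := by
  intro w
  induction w with
  | nil =>
    intro R hR _ _ _
    refine ⟨hR, ?_⟩
    simp
  | cons x w ih =>
    intro R hR hnd hlt hdisj
    have hx : x < m := hlt x (by simp)
    obtain ⟨iRC, iin, ibm⟩ := ins_spec hm hx R hR (hdisj x (by simp))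
    have hstep : ∀ y ∈ w, ¬ inL y (ins x R) := by
      intro y hy hc
      rw [iin] at hc
      rcases hc with rfl | hc
      · exact (List.nodup_cons.mp hnd).1 hy
      · exact hdisj y (by simp [hy]) hc
    obtain ⟨jRC, jbm⟩ := ih (ins x R) iRC (List.nodup_cons.mp hnd).2
      (fun z hz => hlt z (by simp [hz])) hstep
    refine ⟨jRC, ?_⟩
    have e1 : wordOf R.reverse ++ (x :: w) = (wordOf R.reverse ++ [x]) ++ w := by simp
    rw [e1, bm_append hm, ibm, ← bm_append hm, jbm]
    rfl

/-- every positive braid word with distinct letters is represented by a canonical form. -/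
lemma exists_canonical (hm : 0 < m) (w : List ℕ) (hnd : w.Nodup) (hlt : ∀ x ∈ w, x < m) :
    ∃ L : List (ℕ × ℕ), Canon m L ∧ bm m hm w = bm m hm (wordOf L) := by
  obtain ⟨hRC, hbm⟩ := fold_spec hm w [] (by constructor <;> simp) hnd hlt
    (by intro x _ hc; obtain ⟨p, hp, -⟩ := hc; simp at hp)
  refine ⟨(w.foldl (fun S y => ins y S) []).reverse, RC_iff_canon.mp hRC, ?_⟩
  simpa [wordOf] using hbm

/-! ### Counting canonical forms -/

def canonFinset : ℕ → Finset (List (ℕ × ℕ))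
  | 0 => {[]}
  | m + 1 =>
      canonFinset m ∪
        (Finset.range (m + 1)).attach.biUnion
          (fun j => (canonFinset j.1).image (fun L => L ++ [(j.1, m)]))
  decreasing_by
    · exact Nat.lt_succ_self m
    · exact Finset.mem_range.mp j.2

lemma mem_canonFinset : ∀ m L, L ∈ canonFinset m ↔ Canon m L := by
  intro m
  induction m using Nat.strong_induction_on with
  | _ m ih =>
  intro L
  match m with
  | 0 =>
    simp only [canonFinset, Finset.mem_singleton]
    constructor
    · rintro rfl
      exact ⟨by simp, by simp⟩
    · rintro ⟨h1, -⟩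
      rcases L with _ | ⟨p, L⟩
      · rfl
      · exact absurd (h1 p (by simp)).2 (by omega)
  | m + 1 =>
    rw [canonFinset]
    simp only [Finset.mem_union, Finset.mem_biUnion, Finset.mem_attach, Finset.mem_image,
      true_and, Subtype.exists, Finset.mem_range]
    constructor
    · rintro (hL | ⟨j, hj, L', hL', rfl⟩)
      · obtain ⟨h1, h2⟩ := (ih m (Nat.lt_succ_self m) L).mp hL
        exact ⟨fun p hp => ⟨(h1 p hp).1, by have := (h1 p hp).2; omega⟩, h2⟩
      · obtain ⟨h1, h2⟩ := (ih j hj L').mp hL'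
        refine ⟨?_, ?_⟩
        · intro p hp
          rcases List.mem_append.mp hp with hp | hp
          · have := h1 p hp; constructor <;> omega
          · simp at hp; subst hp; simp; omega
        · rw [List.pairwise_append]
          refine ⟨h2, by simp, ?_⟩
          intro p hp q hq
          simp at hq; subst hq
          have := (h1 p hp).2
          simpa using this
    · rintro ⟨h1, h2⟩
      rcases List.eq_nil_or_concat L with rfl | ⟨M, ⟨j, k⟩, rfl⟩
      · left
        exact (ih m (Nat.lt_succ_self m) []).mpr ⟨by simp, by simp⟩
      · simp only [List.concat_eq_append] at *
        have hjk : j ≤ k ∧ k < m + 1 := h1 (j, k) (by simp)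
        rw [List.pairwise_append] at h2
        have hlt : ∀ p ∈ M, p.2 < j := fun p hp => by
          simpa using h2.2.2 p hp (j, k) (by simp)
        by_cases hk : k = m
        · right
          subst hk
          refine ⟨j, by omega, M, ?_, rfl⟩
          refine (ih j (by omega) M).mpr ⟨?_, h2.1⟩
          intro p hp
          exact ⟨(h1 p (by simp [hp])).1, hlt p hp⟩
        · left
          refine (ih m (Nat.lt_succ_self m) _).mpr ⟨?_, ?_⟩
          · intro p hp
            rcases List.mem_append.mp hp with hp' | hp'
            · have h3 := h1 p (by simp [hp'])
              have h4 := hlt p hp'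
              constructor
              · exact h3.1
              · omega
            · simp at hp'; subst hp'
              simp
              omega
          · rw [List.pairwise_append]
            exact ⟨h2.1, by simp, fun p hp q hq => by
              simp at hq; subst hq; simpa using hlt p hp⟩

lemma card_canonFinset_succ (m : ℕ) :
    (canonFinset (m + 1)).card =
      (canonFinset m).card + ∑ j ∈ Finset.range (m + 1), (canonFinset j).card := by
  rw [canonFinset]
  rw [Finset.card_union_of_disjoint, Finset.card_biUnion]
  · congr 1
    rw [← Finset.sum_attach (Finset.range (m + 1)) (fun j => (canonFinset j).card)]
    refine Finset.sum_congr rfl ?_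
    intro j _
    exact Finset.card_image_of_injective _ (fun L L' h => by simpa using h)
  · -- pairwise disjoint images
    intro p _ q _ hpq
    refine Finset.disjoint_left.mpr ?_
    rintro L hL hL'
    obtain ⟨Lp, -, rfl⟩ := Finset.mem_image.mp hL
    obtain ⟨Lq, -, h⟩ := Finset.mem_image.mp hL'
    apply hpq
    have := congrArg (fun l => l.getLast?) h
    simp at this
    exact this.symm
  · -- main disjointness
    refine Finset.disjoint_left.mpr ?_
    rintro L hL hL'
    obtain ⟨h1, -⟩ := (mem_canonFinset m L).mp hL
    simp only [Finset.mem_biUnion, Finset.mem_attach, true_and, Finset.mem_image,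
      Subtype.exists, Finset.mem_range] at hL'
    obtain ⟨j, hj, L', -, rfl⟩ := hL'
    have := h1 (j, m) (by simp)
    omega

lemma card_canonFinset : ∀ m, (canonFinset m).card = Nat.fib (2 * m + 1) := by
  have hsum : ∀ m, ∑ j ∈ Finset.range m, Nat.fib (2 * j + 1) = Nat.fib (2 * m) := by
    intro m
    induction m with
    | zero => simp
    | succ m ih =>
      rw [Finset.sum_range_succ, ih]
      have : 2 * (m + 1) = (2 * m + 1) + 1 := by omega
      rw [this, Nat.fib_add_two]
  intro m
  induction m using Nat.strong_induction_on with
  | _ m ih =>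
  match m with
  | 0 => simp [canonFinset]
  | m + 1 =>
    rw [card_canonFinset_succ, ih m (Nat.lt_succ_self m),
      Finset.sum_congr rfl (fun j hj => ih j (Finset.mem_range.mp hj)), hsum (m + 1)]
    have h1 : 2 * (m + 1) + 1 = (2 * m + 1) + 1 + 1 := by omega
    have h2 : 2 * (m + 1) = (2 * m + 1) + 1 := by omega
    rw [h1, Nat.fib_add_two, h2]

lemma wordOf_lt {L : List (ℕ × ℕ)} (h : Canon m L) {x : ℕ} (hx : x ∈ wordOf L) : x < m := by
  rw [mem_wordOf] at hx
  obtain ⟨p, hp, -, h2⟩ := hx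
  have := (h.1 p hp).2
  omega

lemma isSimple_bm (hm : 0 < m) {L : List (ℕ × ℕ)} (h : Canon m L) :
    IsSimple (bm m hm (wordOf L)) := by
  refine ⟨(wordOf L).map (emb m hm), ?_, rfl⟩
  refine List.Nodup.map_on ?_ (nodup_wordOf h.canon0)
  intro x hx y hy hxy
  have h1 := emb_val hm (wordOf_lt h hx)
  have h2 := emb_val hm (wordOf_lt h hy)
  rw [← h1, ← h2, hxy]

lemma simple_set_eq (hm : 0 < m) :
    {β : BraidMonoid m | IsSimple β} =
      (fun L => bm m hm (wordOf L)) '' ((canonFinset m : Finset (List (ℕ × ℕ))) : Set _) := by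
  ext β
  simp only [Set.mem_setOf_eq, Set.mem_image, Finset.mem_coe, mem_canonFinset]
  constructor
  · rintro ⟨w, hnd, rfl⟩
    have hmap : (w.map (Fin.val)).map (emb m hm) = w := by
      rw [List.map_map]
      have : ∀ t ∈ w, (emb m hm ∘ Fin.val) t = t := by
        intro t ht
        exact Fin.ext (emb_val hm t.isLt)
      calc w.map (emb m hm ∘ Fin.val) = w.map id := List.map_congr_left this
        _ = w := List.map_id w
    have hnd' : (w.map Fin.val).Nodup := hnd.map Fin.val_injective
    have hlt' : ∀ x ∈ w.map Fin.val, x < m := by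
      rintro x hx
      obtain ⟨t, -, rfl⟩ := List.mem_map.mp hx
      exact t.isLt
    obtain ⟨L, hL, hbm⟩ := exists_canonical hm (w.map Fin.val) hnd' hlt'
    refine ⟨L, hL, ?_⟩
    rw [← hbm]
    unfold bm
    rw [hmap]
  · rintro ⟨L, hL, rfl⟩
    exact isSimple_bm hm hL

lemma bm_injOn (hm : 0 < m) {L L' : List (ℕ × ℕ)} (hL : Canon m L) (hL' : Canon m L')
    (h : bm m hm (wordOf L) = bm m hm (wordOf L')) : L = L' := by
  refine canon_ext hL.canon0 hL'.canon0 ?_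
  intro i
  have h1 := phiHom_eq_of_brMk_eq (i := i) h
  rwa [phiHom_bm hm i _ (fun x hx => wordOf_lt hL hx),
    phiHom_bm hm i _ (fun x hx => wordOf_lt hL' hx)] at h1

end SimpleBraidAux

open SimpleBraidAux in
/-- The number of simple braids in `SB_n` (positive `n`-strand braids, on generators
`x_1, …, x_{n-1}`, containing each generator at most once) is the Fibonacci number
`F_{2n-1}` (with `F_0 = 0`, `F_1 = F_2 = 1`). -/
theorem card_simple_braids (n : ℕ) (hn : 1 ≤ n) :
    {β : BraidMonoid (n - 1) | IsSimple β}.ncard = Nat.fib (2 * n - 1) := by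
  set m := n - 1 with hm
  rcases Nat.eq_zero_or_pos m with hm0 | hmpos
  · -- n = 1 : the braid monoid on 0 generators is trivial
    have hn1 : n = 1 := by omega
    subst hn1
    have hall : ∀ w : FreeMonoid (Fin (1 - 1)), w = 1 := by
      intro w
      have h0 : FreeMonoid.toList w = [] := by
        rcases h : FreeMonoid.toList w with _ | ⟨t, l⟩
        · rfl
        · exact t.elim0
      have := congrArg FreeMonoid.ofList h0
      simpa using this
    have : {β : BraidMonoid (1 - 1) | IsSimple β} = {brMk (1 - 1) 1} := by
      ext β
      simp only [Set.mem_setOf_eq, Set.mem_singleton_iff]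
      constructor
      · rintro ⟨w, -, rfl⟩
        rw [hall (FreeMonoid.ofList w)]
      · rintro rfl
        exact ⟨[], by simp, by rw [hall (FreeMonoid.ofList [])]⟩
    rw [this, Set.ncard_singleton]
    rfl
  · rw [simple_set_eq hmpos, Set.ncard_image_of_injOn, Set.ncard_coe_finset,
      card_canonFinset]
    · congr 1
      omega
    · intro L hL L' hL' h
      rw [Finset.mem_coe, mem_canonFinset] at hL hL'
      exact bm_injOn hmpos hL hL' h
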